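/- Let A = M_n(k) over a commutative field k. Every nearly Frobenius coproduct Δ on A is of the form Δ(E_{ij}) = Σ_{r,s} a_{rs} E_{ir} ⊗ E_{sj} for scalars a_{rs} ∈ k. In particular, the vector space of nearly Frobenius coproducts on M_n(k) has dimension n². -/

import Mathlib

open TensorProduct

/-- A nearly Frobenius coproduct on `A`: a coassociative `A`-bimodule map. -/
def IsNearlyFrobenius (k : Type*) [Field k] (A : Type*) [Ring A] [Algebra k A]
    (Δ : A →ₗ[k] A ⊗[k] A) : Prop :=
  (∀ a x b : A, Δ (a * x * b) = (a ⊗ₜ[k] (1 : A)) * Δ x * ((1 : A) ⊗ₜ[k] b)) ∧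
  (∀ x : A, (TensorProduct.assoc k A A A) (LinearMap.rTensor A Δ (Δ x)) =
      LinearMap.lTensor A Δ (Δ x))

section Aux
variable {k : Type*} [Field k] {n : ℕ}

local notation "A" => Matrix (Fin n) (Fin n) k
local notation "E" => fun i j => Matrix.single i j (1:k)

lemma E_mul_E (i j p q : Fin n) :
    (E i j) * (E p q) = if j = p then E i q else (0:A) := by
  split
  · next h => subst h; rw [Matrix.single_mul_single_same, one_mul]
  · next h => exact Matrix.single_mul_single_of_ne (h := h) ..

noncomputable def Dmap (r s : Fin n) :
    Matrix (Fin n) (Fin n) k →ₗ[k] Matrix (Fin n) (Fin n) k ⊗[k] Matrix (Fin n) (Fin n) k :=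
  ∑ p : Fin n, ((TensorProduct.mk k A A).flip
      (Matrix.single s p (1:k))).comp (LinearMap.mulRight k (Matrix.single p r (1:k)))

lemma Dmap_apply (r s : Fin n) (x : A) :
    Dmap r s x = ∑ p : Fin n, (x * E p r) ⊗ₜ[k] (E s p) := by
  simp [Dmap, LinearMap.sum_apply, TensorProduct.mk_apply]

lemma Dmap_basis (r s i j : Fin n) :
    Dmap r s (E i j) = (E i r) ⊗ₜ[k] (E s j) := by
  rw [Dmap_apply]
  rw [Finset.sum_eq_single j]
  · rw [E_mul_E]; simp
  · intro p _ hp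
    rw [E_mul_E, if_neg (Ne.symm hp)]
    simp
  · simp

lemma mul_E' (b : A) (p r : Fin n) : b * (E p r) = ∑ c, b c p • E c r := by
  ext i j
  simp [Matrix.mul_apply, Matrix.single, Matrix.sum_apply, ite_and, Finset.sum_ite_eq]

lemma E_mul' (b : A) (s p : Fin n) : (E s p) * b = ∑ d, b p d • E s d := by
  ext i j
  simp [Matrix.mul_apply, Matrix.single, Matrix.sum_apply, ite_and, Finset.sum_ite_eq,
    Finset.sum_ite_eq']

lemma Dmap_bimodule (r s : Fin n) (a x b : A) :
    Dmap r s (a * x * b) = (a ⊗ₜ[k] (1:A)) * Dmap r s x * ((1:A) ⊗ₜ[k] b) := by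
  rw [Dmap_apply, Dmap_apply, Finset.mul_sum, Finset.sum_mul]
  simp only [Algebra.TensorProduct.tmul_mul_tmul, one_mul, mul_one, mul_assoc]
  calc ∑ p : Fin n, (a * (x * (b * E p r))) ⊗ₜ[k] (E s p)
      = ∑ p : Fin n, ∑ c : Fin n, b c p • ((a * (x * E c r)) ⊗ₜ[k] (E s p)) := by
        refine Finset.sum_congr rfl fun p _ => ?_
        rw [mul_E' b p r, Finset.mul_sum, Finset.mul_sum, TensorProduct.sum_tmul]
        refine Finset.sum_congr rfl fun c _ => ?_
        rw [mul_smul_comm, mul_smul_comm, TensorProduct.smul_tmul']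
    _ = ∑ c : Fin n, ∑ p : Fin n, b c p • ((a * (x * E c r)) ⊗ₜ[k] (E s p)) :=
        Finset.sum_comm
    _ = ∑ p : Fin n, (a * (x * E p r)) ⊗ₜ[k] ((E s p) * b) := by
        refine Finset.sum_congr rfl fun c _ => ?_
        rw [E_mul' b s c, TensorProduct.tmul_sum]
        refine Finset.sum_congr rfl fun d _ => ?_
        rw [TensorProduct.tmul_smul]

lemma matExt {M : Type*} [AddCommMonoid M] [Module k M]
    {f g : Matrix (Fin n) (Fin n) k →ₗ[k] M}
    (h : ∀ i j, f (Matrix.single i j (1:k)) = g (Matrix.single i j (1:k))) :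
    f = g := by
  apply (Matrix.stdBasis k (Fin n) (Fin n)).ext
  rintro ⟨i, j⟩
  rw [Matrix.stdBasis_eq_single]
  exact h i j

lemma Dmap_coassoc (r s : Fin n) (x : A) :
    (TensorProduct.assoc k A A A) (LinearMap.rTensor A (Dmap r s) (Dmap r s x)) =
      LinearMap.lTensor A (Dmap r s) (Dmap r s x) := by
  have h : ((TensorProduct.assoc k A A A).toLinearMap.comp
      ((LinearMap.rTensor A (Dmap r s)).comp (Dmap r s))) =
      (LinearMap.lTensor A (Dmap r s)).comp (Dmap r s) := by
    apply matExt
    intro i j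
    simp [Dmap_basis, LinearMap.rTensor_tmul, LinearMap.lTensor_tmul,
      TensorProduct.assoc_tmul]
  exact LinearMap.congr_fun h x

lemma part1core (z : Fin n) (Δ : A →ₗ[k] A ⊗[k] A)
    (hΔ : ∀ a x b : A, Δ (a * x * b) = (a ⊗ₜ[k] (1:A)) * Δ x * ((1:A) ⊗ₜ[k] b)) :
    ∀ i j : Fin n, Δ (E i j) = ∑ r : Fin n, ∑ s : Fin n,
      (((Matrix.stdBasis k (Fin n) (Fin n)).tensorProduct
        (Matrix.stdBasis k (Fin n) (Fin n))).equivFun (Δ (E z z)) ((z, r), (s, z))) •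
        ((E i r) ⊗ₜ[k] (E s j)) := by
  set B := (Matrix.stdBasis k (Fin n) (Fin n)).tensorProduct
    (Matrix.stdBasis k (Fin n) (Fin n)) with hB
  set c := B.equivFun (Δ (E z z)) with hc
  intro i j
  have h1 : (E i j : A) = E i z * E z z * E z j := by
    rw [Matrix.single_mul_single_same, Matrix.single_mul_single_same]
    norm_num
  rw [h1, hΔ]
  conv_lhs => rw [← Module.Basis.sum_equivFun B (Δ (E z z))]
  rw [Finset.mul_sum, Finset.sum_mul]
  calc ∑ idx : (Fin n × Fin n) × (Fin n × Fin n),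
        (E i z ⊗ₜ[k] (1:A)) * (c idx • B idx) * ((1:A) ⊗ₜ[k] (E z j))
      = ∑ idx : (Fin n × Fin n) × (Fin n × Fin n),
          (if idx.1.1 = z then (if idx.2.2 = z then
            c idx • ((E i idx.1.2) ⊗ₜ[k] (E idx.2.1 j)) else 0) else 0) := by
        refine Finset.sum_congr rfl fun idx _ => ?_
        obtain ⟨⟨p, q⟩, ⟨r, s⟩⟩ := idx
        simp only [hB, Module.Basis.tensorProduct_apply, Matrix.stdBasis_eq_single,
          mul_smul_comm, smul_mul_assoc, Algebra.TensorProduct.tmul_mul_tmul,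
          one_mul, mul_one, E_mul_E]
        by_cases h1 : p = z <;> by_cases h2 : s = z <;>
          simp [h1, h2, eq_comm (a := z) (b := p)]
    _ = ∑ r : Fin n, ∑ s : Fin n, c ((z, r), (s, z)) • ((E i r) ⊗ₜ[k] (E s j)) := by
        simp only [Fintype.sum_prod_type]
        simp [Finset.sum_ite_irrel, Finset.sum_ite_eq', Finset.sum_const_zero]

end Aux

set_option maxHeartbeats 1600000 in
theorem matrix_nearlyFrobenius_classification (k : Type*) [Field k] (n : ℕ) :
    (∀ Δ : Matrix (Fin n) (Fin n) k →ₗ[k]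
        Matrix (Fin n) (Fin n) k ⊗[k] Matrix (Fin n) (Fin n) k,
      IsNearlyFrobenius k (Matrix (Fin n) (Fin n) k) Δ →
      ∃ a : Fin n → Fin n → k, ∀ i j : Fin n,
        Δ (Matrix.single i j (1 : k)) =
          ∑ r : Fin n, ∑ s : Fin n, a r s •
            ((Matrix.single i r (1 : k)) ⊗ₜ[k]
              (Matrix.single s j (1 : k)))) ∧
    (∃ D : Fin n × Fin n →
        (Matrix (Fin n) (Fin n) k →ₗ[k]
          Matrix (Fin n) (Fin n) k ⊗[k] Matrix (Fin n) (Fin n) k),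
      (∀ rs : Fin n × Fin n, IsNearlyFrobenius k (Matrix (Fin n) (Fin n) k) (D rs)) ∧
      LinearIndependent k D ∧
      (∀ Δ, IsNearlyFrobenius k (Matrix (Fin n) (Fin n) k) Δ →
        ∃ a : Fin n × Fin n → k, Δ = ∑ rs : Fin n × Fin n, a rs • D rs)) := by
  rcases Nat.eq_zero_or_pos n with hn | hn
  · subst hn
    constructor
    · intro Δ _
      exact ⟨fun _ _ => 0, fun i j => i.elim0⟩
    · refine ⟨fun rs => rs.1.elim0, fun rs => rs.1.elim0, linearIndependent_empty_type, ?_⟩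
      intro Δ hΔ
      refine ⟨fun _ => 0, ?_⟩
      have hs : Subsingleton (Matrix (Fin 0) (Fin 0) k) :=
        ⟨fun a b => by ext i j; exact i.elim0⟩
      ext x
      rw [Subsingleton.elim x (0 : Matrix (Fin 0) (Fin 0) k)]
      simp
  · have z : Fin n := ⟨0, hn⟩
    constructor
    · intro Δ hΔ
      exact ⟨_, part1core z Δ hΔ.1⟩
    · refine ⟨fun rs => Dmap rs.1 rs.2,
        fun rs => ⟨Dmap_bimodule rs.1 rs.2, Dmap_coassoc rs.1 rs.2⟩, ?_, ?_⟩
      · refine (Fintype.linearIndependent_iff (v := fun rs : Fin n × Fin n => Dmap (k := k) rs.1 rs.2)).mpr ?_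
        intro g hg
        set B := (Matrix.stdBasis k (Fin n) (Fin n)).tensorProduct
          (Matrix.stdBasis k (Fin n) (Fin n)) with hB
        have hinj : Function.Injective
            (fun rs : Fin n × Fin n => (((z, rs.1), (rs.2, z)) :
              (Fin n × Fin n) × (Fin n × Fin n))) := by
          rintro ⟨r, s⟩ ⟨r', s'⟩ h
          simpa [Prod.ext_iff] using h
        have hli := B.linearIndependent.comp _ hinj
        have h2 : ∑ rs : Fin n × Fin n, g rs • B ((z, rs.1), (rs.2, z)) = 0 := by
          have h3 := congrArg (fun f => f (Matrix.single z z (1 : k))) hg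
          simpa [LinearMap.sum_apply, LinearMap.smul_apply, Dmap_basis, hB,
            Module.Basis.tensorProduct_apply, Matrix.stdBasis_eq_single] using h3
        exact Fintype.linearIndependent_iff.mp hli g h2
      · intro Δ hΔ
        refine ⟨fun rs =>
          (((Matrix.stdBasis k (Fin n) (Fin n)).tensorProduct
            (Matrix.stdBasis k (Fin n) (Fin n))).equivFun
              (Δ (Matrix.single z z (1 : k))) ((z, rs.1), (rs.2, z))), ?_⟩
        apply matExt
        intro i j
        rw [part1core z Δ hΔ.1 i j]
        simp [LinearMap.sum_apply, LinearMap.smul_apply, Dmap_basis, Fintype.sum_prod_type]
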